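/- Polynomial structure of the eigenvalue recurrence solutions: for each n ≥ 1 there exists a real polynomial P_n ∈ ℝ[X] of degree exactly n − 1 whose coefficient of X^k vanishes whenever k and n − 1 have different parity, such that for every ω ∈ ℝ the unique solution φ^ω : ℕ → ℂ of the eigenvalue recurrence for ω with initial data φ^ω 0 = 0 and φ^ω 1 = 1 satisfies φ^ω n = (Complex.I)^(n−1) · P_n.eval ω. In particular, for every ω ∈ ℝ the number i^(1−n)·φ^ω n is real, and ω ↦ φ^ω n is a polynomial of degree n − 1 in ω. -/
import Mathlib

noncomputable def Prec : ℕ → Polynomial ℝ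
  | 0 => 0
  | 1 => 1
  | (m+2) => (-(((m:ℝ)+1)/2 + 3/4)⁻¹) •
      (Polynomial.X * Prec (m+1) + (((m:ℝ)+1)/2 + 1/4) • Prec m)

lemma Prec_zero : Prec 0 = 0 := rfl
lemma Prec_one : Prec 1 = 1 := rfl
lemma Prec_succ (m : ℕ) : Prec (m+2) = (-(((m:ℝ)+1)/2 + 3/4)⁻¹) •
      (Polynomial.X * Prec (m+1) + (((m:ℝ)+1)/2 + 1/4) • Prec m) := rfl

lemma aux_a_ne (m : ℕ) : (((m:ℝ)+1)/2 + 3/4) ≠ 0 := by positivity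

lemma aux_c_ne (m : ℕ) : (-(((m:ℝ)+1)/2 + 3/4)⁻¹) ≠ 0 := by
  simp [inv_ne_zero (aux_a_ne m)]

lemma Prec_degree (n : ℕ) : (Prec (n+1)).degree = n := by
  induction n using Nat.twoStepInduction with
  | zero => simp [Prec_one]
  | one =>
      rw [show (1:ℕ)+1 = 0+2 from rfl, Prec_succ, Prec_zero, Prec_one,
        mul_one, smul_zero, add_zero, Polynomial.smul_eq_C_mul,
        Polynomial.degree_C_mul (aux_c_ne 0), Polynomial.degree_X]
      rfl
  | more m ih0 ih1 =>
      have hne : Prec (m+1+1) ≠ 0 := by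
        intro h
        rw [h, Polynomial.degree_zero] at ih1
        exact absurd ih1.symm (by simp)
      have hXmul : (Polynomial.X * Prec (m+1+1)).degree = ((m+2 : ℕ) : WithBot ℕ) := by
        rw [Polynomial.degree_mul, Polynomial.degree_X, ih1]
        push_cast
        ring
      have hsmall : ((((m:ℝ)+1+1)/2 + 1/4) • Prec (m+1)).degree
          < ((m+2 : ℕ) : WithBot ℕ) := by
        refine lt_of_le_of_lt (Polynomial.degree_smul_le _ _) ?_
        rw [ih0]
        exact_mod_cast (by omega : m < m + 2)
      have hc := aux_c_ne (m+1)
      push_cast at hc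
      rw [show m+2+1 = (m+1)+2 from rfl, Prec_succ]
      push_cast
      rw [Polynomial.smul_eq_C_mul, Polynomial.degree_C_mul hc,
        Polynomial.degree_add_eq_left_of_degree_lt (by rw [hXmul]; exact_mod_cast hsmall)]
      exact_mod_cast hXmul

lemma Prec_parity (n : ℕ) : ∀ k : ℕ, k % 2 ≠ n % 2 → (Prec (n+1)).coeff k = 0 := by
  induction n using Nat.twoStepInduction with
  | zero =>
      intro k hk
      rw [Prec_one, Polynomial.coeff_one, if_neg (by omega : ¬ k = 0)]
  | one =>
      intro k hk
      rw [show (1:ℕ)+1 = 0+2 from rfl, Prec_succ, Prec_zero, Prec_one,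
        mul_one, smul_zero, add_zero, Polynomial.coeff_smul, Polynomial.coeff_X,
        if_neg (by omega : ¬ 1 = k), smul_zero]
  | more m ih0 ih1 =>
      intro k hk
      rw [show m+2+1 = (m+1)+2 from rfl, Prec_succ]
      have hA : (Polynomial.X * Prec (m+1+1)).coeff k = 0 := by
        rcases k with _ | k
        · rw [Polynomial.mul_coeff_zero, Polynomial.coeff_X_zero, zero_mul]
        · rw [Polynomial.coeff_X_mul]
          exact ih1 k (by omega)
      have hB : (Prec (m+1)).coeff k = 0 := ih0 k (by omega)
      push_cast
      rw [Polynomial.coeff_smul, Polynomial.coeff_add]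
      push_cast at hA
      rw [hA, Polynomial.coeff_smul, hB, smul_zero, zero_add, smul_zero]

lemma key_alg (j : ℕ) (A S : ℂ) (hA : A ≠ 0) :
    Complex.I * A * (Complex.I ^ (j+1) * (-A⁻¹ * S)) = Complex.I ^ j * S := by
  have hAA : A * -A⁻¹ = -1 := by field_simp
  calc Complex.I * A * (Complex.I ^ (j+1) * (-A⁻¹ * S))
      = (Complex.I * Complex.I ^ (j+1)) * (A * -A⁻¹) * S := by ring
    _ = Complex.I ^ (j+2) * (-1) * S := by rw [hAA, ← pow_succ']
    _ = Complex.I ^ j * S := by rw [pow_add, Complex.I_sq]; ring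



/-- Polynomial structure of the eigenvalue recurrence solutions: for each n ≥ 1 there
is a real polynomial P of degree exactly n − 1, whose coefficient of X^k vanishes
whenever k and n − 1 have different parity, such that for every ω ∈ ℝ the unique
solution φ of the eigenvalue recurrence for ω with φ 0 = 0, φ 1 = 1 satisfies
φ n = i^(n−1)·P(ω). -/
theorem eigenfunction_polynomial_structure (n : ℕ) (hn : 1 ≤ n) :
    ∃ P : Polynomial ℝ,
      P.degree = (n - 1 : ℕ) ∧
      (∀ k : ℕ, k % 2 ≠ (n - 1) % 2 → P.coeff k = 0) ∧
      ∀ (ω : ℝ) (φ : ℕ → ℂ), φ 0 = 0 → φ 1 = 1 →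
        (∀ m : ℕ, 1 ≤ m →
          (ω : ℂ) * φ m =
            Complex.I * ((m : ℂ) / 2 + 3 / 4) * φ (m + 1) -
              Complex.I * ((m : ℂ) / 2 + 1 / 4) * φ (m - 1)) →
        φ n = Complex.I ^ (n - 1) * ((P.eval ω : ℝ) : ℂ) := by
  obtain ⟨m, rfl⟩ : ∃ m, n = m + 1 := ⟨n - 1, by omega⟩
  refine ⟨Prec (m+1), by simpa using Prec_degree m, by simpa using Prec_parity m, ?_⟩
  intro ω φ h0 h1 hrec
  suffices H : ∀ j : ℕ, φ j = Complex.I ^ (j-1) * (((Prec j).eval ω : ℝ) : ℂ) ∧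
      φ (j+1) = Complex.I ^ j * (((Prec (j+1)).eval ω : ℝ) : ℂ) by
    simpa using (H m).2
  intro j
  induction j with
  | zero =>
      constructor
      · rw [h0, Prec_zero]
        simp
      · rw [h1, Prec_one]
        simp
  | succ j ih =>
      obtain ⟨ihj, ihj1⟩ := ih
      refine ⟨ihj1, ?_⟩
      -- recurrence at j+1
      have hr := hrec (j+1) (by omega)
      have hIφ : Complex.I * φ j = Complex.I ^ j * (((Prec j).eval ω : ℝ) : ℂ) := by
        rcases j with _ | j
        · rw [h0, Prec_zero]
          simp
        · rw [ihj, Nat.add_sub_cancel, pow_succ]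
          ring
      have hane : ((((j:ℝ)+1)/2 + 3/4 : ℝ) : ℂ) ≠ 0 := by exact_mod_cast aux_a_ne j
      push_cast at hane
      have ha : (Complex.I * (((j:ℂ)+1)/2 + 3/4)) ≠ 0 :=
        mul_ne_zero Complex.I_ne_zero hane
      apply mul_left_cancel₀ ha
      have hr := hrec (j+1) (by omega)
      rw [Nat.add_sub_cancel] at hr
      rw [show ((j+1 : ℕ) : ℂ) = (j:ℂ)+1 by push_cast; ring] at hr
      have lhs_eq : Complex.I * (((j:ℂ)+1)/2 + 3/4) * φ (j+1+1)
          = (ω : ℂ) * φ (j+1) + Complex.I * (((j:ℂ)+1)/2 + 1/4) * φ j := by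
        rw [hr]; ring
      rw [lhs_eq, ihj1]
      have hIφ' : Complex.I * (((j:ℂ)+1)/2 + 1/4) * φ j
          = (((j:ℂ)+1)/2 + 1/4) * (Complex.I ^ j * (((Prec j).eval ω : ℝ) : ℂ)) := by
        rw [← hIφ]; ring
      rw [hIφ']
      have heval : ((Prec (j+2)).eval ω : ℝ)
          = (-(((j:ℝ)+1)/2 + 3/4)⁻¹) *
            (ω * (Prec (j+1)).eval ω + (((j:ℝ)+1)/2 + 1/4) * (Prec j).eval ω) := by
        rw [Prec_succ]
        simp [Polynomial.eval_smul, smul_eq_mul]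
        ring
      rw [show j+1+1 = j+2 from rfl, heval]
      push_cast
      rw [key_alg j _ _ hane]
      ring
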